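/- arXiv:0807.1753 — 2 statements merged into one kernel-verified Lean document; each statement's English description precedes it below -/
import Mathlib

section
/- Let n ≥ 2 and K be natural numbers with 1 ≤ K ≤ n, and let T : ℕ → ℝ satisfy T K = 0 and, for every l with 1 ≤ l < K, T l = 1 + (l/n)·(T l) + ((n−l)/n)·(T (l+1)). Then T 1 = ∑_{l=1}^{K−1} n/(n−l). -/
/-- Expected hitting time of the gathering chain: when the maximal group has `l`
robots it grows to `l+1` with probability `(n-l)/n` and stays with probability `l/n`.
If `T K = 0` and `T l = 1 + (l/n)·T l + ((n-l)/n)·T (l+1)` for `1 ≤ l < K`,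
then `T 1 = ∑_{l=1}^{K-1} n/(n-l)`. -/
theorem gathering_hitting_time (n K : ℕ) (hn : 2 ≤ n) (hK1 : 1 ≤ K) (hKn : K ≤ n)
    (T : ℕ → ℝ) (hTK : T K = 0)
    (hrec : ∀ l, 1 ≤ l → l < K →
      T l = 1 + ((l : ℝ) / n) * T l + (((n : ℝ) - l) / n) * T (l + 1)) :
    T 1 = ∑ l ∈ Finset.Icc 1 (K - 1), (n : ℝ) / ((n : ℝ) - l) := by
  have key : ∀ d l, 1 ≤ l → l + d = K →
      T l = ∑ j ∈ Finset.Icc l (K - 1), (n : ℝ) / ((n : ℝ) - j) := by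
    intro d
    induction d with
    | zero =>
      intro l hl hlK
      simp only [Nat.add_zero] at hlK
      subst hlK
      rw [Finset.Icc_eq_empty (by omega), Finset.sum_empty, hTK]
    | succ d ih =>
      intro l hl hlK
      have hlK' : l < K := by omega
      have hln : l < n := by omega
      have hn0 : (n : ℝ) ≠ 0 := by positivity
      have hnl : (n : ℝ) - l ≠ 0 := by
        have : (l : ℝ) < n := by exact_mod_cast hln
        linarith
      have hstep : T l = (n : ℝ) / ((n : ℝ) - l) + T (l + 1) := by
        have h := hrec l hl hlK'
        field_simp at h ⊢
        ring_nf at h ⊢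
        linarith
      have hrest := ih (l + 1) (by omega) (by omega)
      have hset : Finset.Icc l (K - 1) = insert l (Finset.Icc (l + 1) (K - 1)) := by
        rw [Finset.Icc_add_one_left_eq_Ioc, Finset.Ioc_insert_left (by omega)]
      rw [hstep, hrest, hset, Finset.sum_insert (by simp)]
  exact key (K - 1) 1 le_rfl (by omega)
end

section
/- For every natural number m ≥ 2, one has ∑_{j=2}^{m} 1/(1 − (1/4)^{j}) ≤ m + 4/3. Consequently the expected convergence time of probabilistic scattering of m robots is O(m), and in a crash-prone system with n robots of which at most f crash, replacing m by n−f yields the bound (n−f) + 4/3. -/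
lemma scattering_aux (m : ℕ) (hm : 2 ≤ m) :
    ∑ j ∈ Finset.Icc 2 m, 1 / (1 - (1 / 4 : ℝ) ^ j)
      ≤ (m : ℝ) + 4 / 3 - (16 / 45) * (1 / 4 : ℝ) ^ m := by
  induction m, hm using Nat.le_induction with
  | base => norm_num
  | succ m hm ih =>
    rw [Finset.sum_Icc_succ_top (by omega : 2 ≤ m + 1)]
    have hx : (0 : ℝ) < (1 / 4 : ℝ) ^ m := by positivity
    have hx' : (1 / 4 : ℝ) ^ m ≤ (1 / 4 : ℝ) ^ 2 := by
      apply pow_le_pow_of_le_one <;> norm_num <;> omega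
    have hpos : (0 : ℝ) < 1 - (1 / 4 : ℝ) ^ (m + 1) := by
      have : (1 / 4 : ℝ) ^ (m + 1) ≤ (1 / 4 : ℝ) ^ 1 := by
        apply pow_le_pow_of_le_one <;> norm_num
      nlinarith
    have hterm : 1 / (1 - (1 / 4 : ℝ) ^ (m + 1)) ≤ 1 + (4 / 15) * (1 / 4 : ℝ) ^ m := by
      rw [div_le_iff₀ hpos, pow_succ]
      nlinarith [sq_nonneg ((1 / 4 : ℝ) ^ m)]
    have := ih
    push_cast
    rw [pow_succ] at hterm ⊢
    nlinarith

/-- Expected scattering convergence time bound: `∑_{j=2}^{m} 1/(1 − (1/4)^j) ≤ m + 4/3`,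
hence `O(m)`; replacing `m` by `n − f` yields the crash-prone bound `(n−f) + 4/3`. -/
theorem scattering_time_bound :
    (∀ m : ℕ, 2 ≤ m →
      ∑ j ∈ Finset.Icc 2 m, 1 / (1 - (1 / 4 : ℝ) ^ j) ≤ (m : ℝ) + 4 / 3) ∧
    (∀ n f : ℕ, 2 ≤ n - f →
      ∑ j ∈ Finset.Icc 2 (n - f), 1 / (1 - (1 / 4 : ℝ) ^ j) ≤
        ((n - f : ℕ) : ℝ) + 4 / 3) := by
  have key : ∀ m : ℕ, 2 ≤ m →
      ∑ j ∈ Finset.Icc 2 m, 1 / (1 - (1 / 4 : ℝ) ^ j) ≤ (m : ℝ) + 4 / 3 := by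
    intro m hm
    have := scattering_aux m hm
    have : (0 : ℝ) < (16 / 45) * (1 / 4 : ℝ) ^ m := by positivity
    linarith [scattering_aux m hm]
  exact ⟨key, fun n f h => key (n - f) h⟩
end
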